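/- Let u₀ ∈ H¹_α(ℝⁿ) with decay character r*(u₀) = r* ∈ (-n/2, ∞), and suppose P_{r*}(u₀) > 0. Then there exists C₁ > 0, depending only on μ, α, r*, n and P_{r*}(u₀), such that the solution ū of the linearized equation ∂_t(ū - αΔū) - μΔū = 0 with ū(0) = u₀ satisfies ‖ū(t)‖²_{H¹_α(ℝⁿ)} ≥ C₁(t+1)^{-(n/2 + r*)} for all t ≥ 0. -/

import Mathlib

/- STATEMENT 9: Lower bound for the linear pseudo-parabolic evolution. If
   u₀ ∈ H¹_α(ℝⁿ) has decay character r* ∈ (-n/2,∞) with indicator limit P > 0, then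
   ‖ū(t)‖²_{H¹_α} ≥ C₁(t+1)^{-(n/2+r*)}, where on the Fourier side (Plancherel, up
   to the constant (2π)^n absorbed into C₁)
   ‖ū(t)‖²_{H¹_α} = ∫ (1+α|ξ|²)|e^{-μ|ξ|²t/(1+α|ξ|²)} û₀(ξ)|² dξ.
   We formalize in terms of û₀ (an arbitrary L² function with |ξ|û₀ ∈ L²). -/

noncomputable section
open MeasureTheory Filter

set_option maxHeartbeats 1600000 in
theorem linear_decay_lower_bound (n : ℕ) (hn : 0 < n) (α μ : ℝ) (hα : 0 < α) (hμ : 0 < μ)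
    (u0hat : EuclideanSpace ℝ (Fin n) → EuclideanSpace ℂ (Fin n))
    (hL2 : MemLp u0hat 2 volume)
    (hH1 : MemLp (fun ξ : EuclideanSpace ℝ (Fin n) => ‖ξ‖ * ‖u0hat ξ‖) 2 volume)
    (r P : ℝ) (hr : -((n : ℝ) / 2) < r) (hP : 0 < P)
    (hlim : Tendsto
      (fun ρ : ℝ => ρ ^ (-2 * r - (n : ℝ)) *
        ∫ ξ in Metric.closedBall (0 : EuclideanSpace ℝ (Fin n)) ρ, ‖u0hat ξ‖ ^ 2)
      (nhdsWithin 0 (Set.Ioi 0)) (nhds P)) :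
    ∃ C₁ : ℝ, 0 < C₁ ∧ ∀ t : ℝ, 0 ≤ t →
      C₁ * (t + 1) ^ (-((n : ℝ) / 2 + r)) ≤
        ∫ ξ, (1 + α * ‖ξ‖ ^ 2) *
          ‖Real.exp (-(μ * ‖ξ‖ ^ 2) * t / (1 + α * ‖ξ‖ ^ 2)) • u0hat ξ‖ ^ 2 := by
  -- extract ε from the limit
  have hPlim : ∀ᶠ ρ in nhdsWithin (0:ℝ) (Set.Ioi 0), P/2 <
      ρ ^ (-2 * r - (n : ℝ)) *
        ∫ ξ in Metric.closedBall (0 : EuclideanSpace ℝ (Fin n)) ρ, ‖u0hat ξ‖ ^ 2 :=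
    hlim.eventually (eventually_gt_nhds (by linarith))
  rw [eventually_nhdsWithin_iff, Metric.eventually_nhds_iff] at hPlim
  obtain ⟨ε, hε, hball⟩ := hPlim
  set ρ₀ : ℝ := ε / 2 with hρ₀def
  have hρ₀ : 0 < ρ₀ := by positivity
  have hρ₀ε : ρ₀ < ε := by simp only [hρ₀def]; linarith
  -- integrability facts
  have hI2 : Integrable (fun ξ : EuclideanSpace ℝ (Fin n) => ‖u0hat ξ‖ ^ 2) volume := by
    have := hL2.integrable_norm_rpow (by norm_num) (by norm_num)
    have h2 : ((2:ENNReal)).toReal = ((2:ℕ):ℝ) := by norm_num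
    simpa [h2, Real.rpow_natCast] using this
  have hI2' : Integrable (fun ξ : EuclideanSpace ℝ (Fin n) => (‖ξ‖ * ‖u0hat ξ‖) ^ 2) volume := by
    have := hH1.integrable_norm_rpow (by norm_num) (by norm_num)
    have h2 : ((2:ENNReal)).toReal = ((2:ℕ):ℝ) := by norm_num
    simp only [h2, Real.rpow_natCast] at this
    refine this.congr (Eventually.of_forall fun ξ => ?_)
    simp only [Real.norm_eq_abs]
    rw [abs_of_nonneg (by positivity)]
  set A : ℝ := 2 * r + n with hAdef
  have hA : 0 < A := by simp only [hAdef]; linarith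
  refine ⟨Real.exp (-(μ * ρ₀ ^ 2)) ^ 2 * (P/2) * ρ₀ ^ A, by positivity, fun t ht => ?_⟩
  have ht1 : (0:ℝ) < t + 1 := by linarith
  set s : ℝ := Real.sqrt (t + 1) with hsdef
  have hs1 : 1 ≤ s := Real.one_le_sqrt.mpr (by linarith)
  have hs : 0 < s := lt_of_lt_of_le one_pos hs1
  set ρ : ℝ := ρ₀ / s with hρdef
  have hρpos : 0 < ρ := by positivity
  have hρle : ρ ≤ ρ₀ := by
    rw [hρdef, div_le_iff₀ hs]; nlinarith
  have hρε : ρ < ε := lt_of_le_of_lt hρle hρ₀ε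
  -- lower bound on the ball integral
  have hIball := hball (show dist ρ 0 < ε by rwa [Real.dist_eq, sub_zero, abs_of_pos hρpos]) (Set.mem_Ioi.mpr hρpos)
  have hρA : (0:ℝ) < ρ ^ A := Real.rpow_pos_of_pos hρpos A
  have hIlow : P/2 * ρ ^ A ≤
      ∫ ξ in Metric.closedBall (0 : EuclideanSpace ℝ (Fin n)) ρ, ‖u0hat ξ‖ ^ 2 := by
    have hneg : ρ ^ (-2 * r - (n : ℝ)) = (ρ ^ A)⁻¹ := by
      rw [show -2 * r - (n:ℝ) = -A by simp [hAdef]; ring, Real.rpow_neg hρpos.le]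
    rw [hneg, inv_mul_eq_div] at hIball
    exact (le_div_iff₀ hρA).mp hIball.le
  -- pointwise facts
  set g : EuclideanSpace ℝ (Fin n) → ℝ := fun ξ =>
    (1 + α * ‖ξ‖ ^ 2) * ‖Real.exp (-(μ * ‖ξ‖ ^ 2) * t / (1 + α * ‖ξ‖ ^ 2)) • u0hat ξ‖ ^ 2
    with hgdef
  have hgrw : ∀ ξ, g ξ = (1 + α * ‖ξ‖ ^ 2) *
      (Real.exp (-(μ * ‖ξ‖ ^ 2) * t / (1 + α * ‖ξ‖ ^ 2)) ^ 2 * ‖u0hat ξ‖ ^ 2) := by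
    intro ξ
    rw [hgdef]
    simp only [norm_smul, Real.norm_eq_abs, abs_of_pos (Real.exp_pos _), mul_pow]
  have hgnonneg : ∀ ξ, 0 ≤ g ξ := fun ξ => by rw [hgrw]; positivity
  have hgle : ∀ ξ, g ξ ≤ ‖u0hat ξ‖ ^ 2 + α * (‖ξ‖ * ‖u0hat ξ‖) ^ 2 := by
    intro ξ
    rw [hgrw]
    have he : Real.exp (-(μ * ‖ξ‖ ^ 2) * t / (1 + α * ‖ξ‖ ^ 2)) ^ 2 ≤ 1 := by
      have : Real.exp (-(μ * ‖ξ‖ ^ 2) * t / (1 + α * ‖ξ‖ ^ 2)) ≤ 1 := by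
        rw [Real.exp_le_one_iff]
        have hd : (0:ℝ) < 1 + α * ‖ξ‖ ^ 2 := by positivity
        apply div_nonpos_of_nonpos_of_nonneg _ hd.le
        have : 0 ≤ μ * ‖ξ‖ ^ 2 * t := by positivity
        nlinarith
      nlinarith [Real.exp_pos (-(μ * ‖ξ‖ ^ 2) * t / (1 + α * ‖ξ‖ ^ 2))]
    have h1 : (1 + α * ‖ξ‖ ^ 2) * (Real.exp (-(μ * ‖ξ‖ ^ 2) * t / (1 + α * ‖ξ‖ ^ 2)) ^ 2
        * ‖u0hat ξ‖ ^ 2) ≤ (1 + α * ‖ξ‖ ^ 2) * ‖u0hat ξ‖ ^ 2 := by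
      apply mul_le_mul_of_nonneg_left _ (by positivity)
      nlinarith [sq_nonneg ‖u0hat ξ‖]
    calc _ ≤ (1 + α * ‖ξ‖ ^ 2) * ‖u0hat ξ‖ ^ 2 := h1
      _ = ‖u0hat ξ‖ ^ 2 + α * (‖ξ‖ * ‖u0hat ξ‖) ^ 2 := by ring
  -- ae strong measurability of g
  have hgm : AEStronglyMeasurable g volume := by
    have hb : Continuous fun ξ : EuclideanSpace ℝ (Fin n) => 1 + α * ‖ξ‖ ^ 2 :=
      continuous_const.add (continuous_const.mul (continuous_norm.pow 2))
    have ha : Continuous fun ξ : EuclideanSpace ℝ (Fin n) => -(μ * ‖ξ‖ ^ 2) * t :=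
      ((continuous_const.mul (continuous_norm.pow 2)).neg).mul continuous_const
    have hc : Continuous fun ξ : EuclideanSpace ℝ (Fin n) =>
        (1 + α * ‖ξ‖ ^ 2) * Real.exp (-(μ * ‖ξ‖ ^ 2) * t / (1 + α * ‖ξ‖ ^ 2)) ^ 2 :=
      hb.mul ((Real.continuous_exp.comp (ha.div hb fun ξ => by positivity)).pow 2)
    have := hc.aestronglyMeasurable.mul (hL2.aestronglyMeasurable.norm.pow 2)
    refine this.congr (Eventually.of_forall fun ξ => ?_)
    simp only [Pi.mul_apply, Pi.pow_apply]
    rw [hgrw]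
    ring
  have hgint : Integrable g volume := by
    refine Integrable.mono' (hI2.add (hI2'.const_mul α)) hgm
      (Eventually.of_forall fun ξ => ?_)
    rw [Real.norm_eq_abs, abs_of_nonneg (hgnonneg ξ)]
    exact hgle ξ
  -- main chain
  have key1 : ∫ ξ in Metric.closedBall (0 : EuclideanSpace ℝ (Fin n)) ρ, g ξ ≤ ∫ ξ, g ξ :=
    setIntegral_le_integral hgint (Eventually.of_forall hgnonneg)
  have key2 : ∫ ξ in Metric.closedBall (0 : EuclideanSpace ℝ (Fin n)) ρ,
      Real.exp (-(μ * ρ₀ ^ 2)) ^ 2 * ‖u0hat ξ‖ ^ 2 ≤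
      ∫ ξ in Metric.closedBall (0 : EuclideanSpace ℝ (Fin n)) ρ, g ξ := by
    refine setIntegral_mono_on ((hI2.const_mul _).integrableOn) hgint.integrableOn
      measurableSet_closedBall fun ξ hξ => ?_
    have hξρ : ‖ξ‖ ≤ ρ := by
      rwa [Metric.mem_closedBall, dist_zero_right] at hξ
    rw [hgrw]
    have hd : (0:ℝ) < 1 + α * ‖ξ‖ ^ 2 := by positivity
    have hexp : Real.exp (-(μ * ρ₀ ^ 2)) ≤
        Real.exp (-(μ * ‖ξ‖ ^ 2) * t / (1 + α * ‖ξ‖ ^ 2)) := by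
      apply Real.exp_le_exp.mpr
      rw [neg_mul, neg_div, neg_le_neg_iff]
      have h1 : μ * ‖ξ‖ ^ 2 * t / (1 + α * ‖ξ‖ ^ 2) ≤ μ * ‖ξ‖ ^ 2 * t := by
        apply div_le_self (by positivity)
        nlinarith [norm_nonneg ξ, sq_nonneg ‖ξ‖]
      have hρ2 : ρ ^ 2 = ρ₀ ^ 2 / (t + 1) := by
        rw [hρdef, div_pow, hsdef, Real.sq_sqrt ht1.le]
      have h2 : μ * ‖ξ‖ ^ 2 * t ≤ μ * ρ₀ ^ 2 := by
        have hξ2 : ‖ξ‖ ^ 2 ≤ ρ ^ 2 := by nlinarith [norm_nonneg ξ]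
        rw [hρ2] at hξ2
        have : ‖ξ‖ ^ 2 * t ≤ ρ₀ ^ 2 := by
          calc ‖ξ‖ ^ 2 * t ≤ ρ₀ ^ 2 / (t + 1) * t := by nlinarith
            _ ≤ ρ₀ ^ 2 := by rw [div_mul_eq_mul_div, div_le_iff₀ ht1]; nlinarith
        nlinarith
      linarith
    have hexp2 : Real.exp (-(μ * ρ₀ ^ 2)) ^ 2 ≤
        Real.exp (-(μ * ‖ξ‖ ^ 2) * t / (1 + α * ‖ξ‖ ^ 2)) ^ 2 := by
      apply pow_le_pow_left₀ (Real.exp_pos _).le hexp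
    have hone : (1:ℝ) ≤ 1 + α * ‖ξ‖ ^ 2 := by nlinarith [sq_nonneg ‖ξ‖]
    calc Real.exp (-(μ * ρ₀ ^ 2)) ^ 2 * ‖u0hat ξ‖ ^ 2
        ≤ Real.exp (-(μ * ‖ξ‖ ^ 2) * t / (1 + α * ‖ξ‖ ^ 2)) ^ 2 * ‖u0hat ξ‖ ^ 2 := by
          apply mul_le_mul_of_nonneg_right hexp2 (by positivity)
      _ ≤ (1 + α * ‖ξ‖ ^ 2) * (Real.exp (-(μ * ‖ξ‖ ^ 2) * t / (1 + α * ‖ξ‖ ^ 2)) ^ 2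
            * ‖u0hat ξ‖ ^ 2) := le_mul_of_one_le_left (by positivity) hone
  have key3 : ∫ ξ in Metric.closedBall (0 : EuclideanSpace ℝ (Fin n)) ρ,
      Real.exp (-(μ * ρ₀ ^ 2)) ^ 2 * ‖u0hat ξ‖ ^ 2 =
      Real.exp (-(μ * ρ₀ ^ 2)) ^ 2 *
      ∫ ξ in Metric.closedBall (0 : EuclideanSpace ℝ (Fin n)) ρ, ‖u0hat ξ‖ ^ 2 :=
    integral_const_mul _ _
  -- identify the constant
  have hconst : Real.exp (-(μ * ρ₀ ^ 2)) ^ 2 * (P/2) * ρ₀ ^ A * (t + 1) ^ (-((n : ℝ) / 2 + r))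
      = Real.exp (-(μ * ρ₀ ^ 2)) ^ 2 * (P/2 * ρ ^ A) := by
    have hρrw : ρ = ρ₀ * (t + 1) ^ (-1/2 : ℝ) := by
      rw [hρdef, hsdef, show (-1/2:ℝ) = -(1/2) by norm_num, Real.rpow_neg ht1.le,
        ← Real.sqrt_eq_rpow, div_eq_mul_inv]
    rw [hρrw, Real.mul_rpow hρ₀.le (Real.rpow_nonneg ht1.le _), ← Real.rpow_mul ht1.le]
    rw [show (-1/2 : ℝ) * A = -((n:ℝ)/2 + r) by rw [hAdef]; ring]
    ring
  rw [hconst]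
  calc Real.exp (-(μ * ρ₀ ^ 2)) ^ 2 * (P/2 * ρ ^ A)
      ≤ Real.exp (-(μ * ρ₀ ^ 2)) ^ 2 *
        ∫ ξ in Metric.closedBall (0 : EuclideanSpace ℝ (Fin n)) ρ, ‖u0hat ξ‖ ^ 2 :=
        mul_le_mul_of_nonneg_left hIlow (by positivity)
    _ ≤ ∫ ξ in Metric.closedBall (0 : EuclideanSpace ℝ (Fin n)) ρ, g ξ := by
        rw [← key3]; exact key2
    _ ≤ ∫ ξ, g ξ := key1
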